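/- Let f, g : [0,∞) → ℝ be continuous functions. If for all t ≥ 0 the right-hand lower Dini derivative D₊f(t) := liminf_{τ→0+} (f(t+τ) - f(t))/τ satisfies D₊f(t) ≤ -g(t), then for all t ≥ 0 we have f(t) - f(0) ≤ -∫₀ᵗ g(s) ds. -/

import Mathlib

open Filter Set

/-- Class `K` comparison functions on `[0,∞)`. -/
def ClassK (f : ℝ → ℝ) : Prop :=
  ContinuousOn f (Ici 0) ∧ StrictMonoOn f (Ici 0) ∧ f 0 = 0 ∧ ∀ r, 0 ≤ r → 0 ≤ f r

/-- Class `K∞` comparison functions. -/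
def ClassKInf (f : ℝ → ℝ) : Prop :=
  ClassK f ∧ ∀ M : ℝ, ∃ r, 0 ≤ r ∧ M < f r

/-- Class `KL` comparison functions. -/
def ClassKL (β : ℝ → ℝ → ℝ) : Prop :=
  (∀ t, 0 ≤ t → ClassK (fun r => β r t)) ∧
  ∀ r, 0 < r → ContinuousOn (β r) (Ici 0) ∧ AntitoneOn (β r) (Ici 0) ∧
    Tendsto (β r) atTop (nhds 0)

/-- Right-hand lower Dini derivative. -/
noncomputable def dini (f : ℝ → ℝ) (t : ℝ) : ℝ :=
  liminf (fun τ => (f (t + τ) - f t) / τ) (nhdsWithin 0 (Ioi 0))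

private lemma liminf_ge_aux {u : ℝ → ℝ} {l : Filter ℝ} {a : ℝ}
    (hev : ∀ᶠ x in l, a ≤ u x) (hb : ¬ Tendsto u l atTop) :
    a ≤ liminf u l := by
  rw [tendsto_atTop] at hb
  push_neg at hb
  obtain ⟨b, hbb⟩ := hb
  rw [liminf_eq]
  refine le_csSup ⟨b, ?_⟩ hev
  rintro y hy
  by_contra hyb
  push_neg at hyb
  exact hbb (hy.mono fun x hx => not_lt.mpr (le_trans hyb.le hx))

/-- Core monotonicity lemma: if `φ` is continuous on `[0, t₀]` and at every point that is
strictly exceeded by all later values the right difference quotient tends to `+∞`, then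
`φ t₀ ≤ φ 0`. -/
private lemma mono_of_slope (φ : ℝ → ℝ) (t₀ : ℝ) (ht₀ : 0 ≤ t₀)
    (hφ : ContinuousOn φ (Icc 0 t₀))
    (hslope : ∀ x, x ∈ Ico 0 t₀ → (∀ y ∈ Ioc x t₀, φ x < φ y) →
      Tendsto (fun τ => (φ (x + τ) - φ x) / τ) (nhdsWithin 0 (Ioi 0)) atTop) :
    φ t₀ ≤ φ 0 := by
  by_contra hcon
  push_neg at hcon
  set A := φ 0 with hA
  set B := φ t₀ with hB
  -- the "last hitting time" of level c
  set S : ℝ → Set ℝ := fun c => {x | x ∈ Icc 0 t₀ ∧ φ x ≤ c} with hS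
  set ψ : ℝ → ℝ := fun c => sSup (S c) with hψ
  have h0S : ∀ c, A < c → 0 ∈ S c := fun c hc => ⟨⟨le_refl 0, ht₀⟩, hc.le⟩
  have hSclosed : ∀ c, IsClosed (S c) := by
    intro c
    have : S c = Icc 0 t₀ ∩ φ ⁻¹' (Iic c) := by ext x; simp [hS, and_comm]
    rw [this]
    exact hφ.preimage_isClosed_of_isClosed isClosed_Icc isClosed_Iic
  have hScomp : ∀ c, IsCompact (S c) := fun c =>
    isCompact_Icc.of_isClosed_subset (hSclosed c) (fun x hx => hx.1)
  have hbdd : ∀ c, BddAbove (S c) := fun c => (hScomp c).bddAbove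
  have hmem : ∀ c, A < c → ψ c ∈ S c := fun c hc =>
    (hScomp c).sSup_mem ⟨0, h0S c hc⟩
  have hψ0 : ∀ c, A < c → 0 ≤ ψ c := fun c hc => (hmem c hc).1.1
  have hψle : ∀ c, A < c → ψ c ≤ t₀ := fun c hc => (hmem c hc).1.2
  have hφψ : ∀ c, A < c → φ (ψ c) ≤ c := fun c hc => (hmem c hc).2
  have hψlt : ∀ c, A < c → c < B → ψ c < t₀ := by
    intro c hc hcB
    rcases lt_or_eq_of_le (hψle c hc) with h | h
    · exact h
    · exfalso; have := hφψ c hc; rw [h] at this; exact absurd (lt_of_le_of_lt this hcB) (lt_irrefl _)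
  have hgt : ∀ c, A < c → ∀ y, ψ c < y → y ≤ t₀ → c < φ y := by
    intro c hc y hy1 hy2
    by_contra hle
    push_neg at hle
    have : y ∈ S c := ⟨⟨le_trans (hψ0 c hc) hy1.le, hy2⟩, hle⟩
    exact absurd (le_csSup (hbdd c) this) (not_le.mpr hy1)
  have hφψeq : ∀ c, A < c → c < B → φ (ψ c) = c := by
    intro c hc hcB
    refine le_antisymm (hφψ c hc) ?_
    have hlt := hψlt c hc hcB
    have hcw : ContinuousWithinAt φ (Ioc (ψ c) t₀) (ψ c) :=
      (hφ.continuousWithinAt ⟨hψ0 c hc, hψle c hc⟩).mono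
        (fun y hy => ⟨le_trans (hψ0 c hc) hy.1.le, hy.2⟩)
    have hne : (nhdsWithin (ψ c) (Ioc (ψ c) t₀)).NeBot := by
      rw [nhdsWithin_Ioc_eq_nhdsGT hlt]; infer_instance
    refine ge_of_tendsto hcw ?_
    filter_upwards [self_mem_nhdsWithin] with y hy
    exact (hgt c hc y hy.1 hy.2).le
  have hψmono : ∀ c c', A < c → c ≤ c' → ψ c ≤ ψ c' := by
    intro c c' hc hcc
    exact csSup_le_csSup (hbdd c') ⟨0, h0S c hc⟩ (fun x hx => ⟨hx.1, le_trans hx.2 hcc⟩)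
  have hψstrict : ∀ c c', A < c → c < c' → c' < B → ψ c < ψ c' := by
    intro c c' hc hcc hc'B
    refine lt_of_le_of_ne (hψmono c c' hc hcc.le) ?_
    intro heq
    have h1 := hφψeq c hc (lt_trans hcc hc'B)
    have h2 := hφψeq c' (lt_trans hc hcc) hc'B
    rw [heq, h2] at h1
    exact absurd h1 (ne_of_gt hcc)
  -- right upper semicontinuity of ψ
  have hψus : ∀ c, A < c → c < B → ∀ η > 0, ∃ δ > 0, ∀ c', A < c' → c' < B →
      c < c' → c' < c + δ → ψ c' ≤ ψ c + η := by
    intro c hc hcB η hη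
    by_cases hcase : t₀ < ψ c + η
    · exact ⟨1, one_pos, fun c' hc' hc'B _ _ => le_trans (hψle c' hc') hcase.le⟩
    · push_neg at hcase
      have hKne : (Icc (ψ c + η) t₀).Nonempty := ⟨ψ c + η, le_refl _, hcase⟩
      have hKsub : Icc (ψ c + η) t₀ ⊆ Icc 0 t₀ := fun x hx =>
        ⟨le_trans (by linarith [hψ0 c hc]) hx.1, hx.2⟩
      obtain ⟨z, hzK, hz⟩ := isCompact_Icc.exists_isMinOn hKne (hφ.mono hKsub)
      have hzgt : c < φ z := hgt c hc z (by linarith [hzK.1]) hzK.2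
      refine ⟨φ z - c, by linarith, fun c' hc' hc'B hcc' hlt => ?_⟩
      refine csSup_le ⟨0, h0S c' hc'⟩ (fun x hx => ?_)
      by_contra hxgt
      push_neg at hxgt
      have hxK : x ∈ Icc (ψ c + η) t₀ := ⟨hxgt.le, hx.1.2⟩
      have := hz hxK
      simp only [mem_lowerBounds] at this
      have hφx : φ z ≤ φ x := this
      have : φ x ≤ c' := hx.2
      linarith
  -- ψ has right derivative zero everywhere
  have hψderiv : ∀ c, A < c → c < B → ∀ M > 0, ∃ δ > 0, ∀ c', A < c' → c' < B →
      c < c' → c' < c + δ → ψ c' - ψ c ≤ (c' - c) / M := by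
    intro c hc hcB M hM
    have hx₀ : ψ c ∈ Ico 0 t₀ := ⟨hψ0 c hc, hψlt c hc hcB⟩
    have hgt' : ∀ y ∈ Ioc (ψ c) t₀, φ (ψ c) < φ y := by
      intro y hy
      rw [hφψeq c hc hcB]
      exact hgt c hc y hy.1 hy.2
    have hT := hslope (ψ c) hx₀ hgt'
    have hev : {τ : ℝ | M ≤ (φ (ψ c + τ) - φ (ψ c)) / τ} ∈ nhdsWithin 0 (Ioi 0) :=
      hT.eventually_ge_atTop M
    rw [mem_nhdsGT_iff_exists_Ioo_subset] at hev
    obtain ⟨δ₁, hδ₁, hsub⟩ := hev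
    simp only [mem_Ioi] at hδ₁
    obtain ⟨δ₂, hδ₂, hδ₂p⟩ := hψus c hc hcB (δ₁ / 2) (by linarith)
    refine ⟨δ₂, hδ₂, fun c' hc' hc'B hcc' hlt => ?_⟩
    have hx'le : ψ c' ≤ ψ c + δ₁ / 2 := hδ₂p c' hc' hc'B hcc' hlt
    have hx'ge : ψ c ≤ ψ c' := hψmono c c' hc hcc'.le
    rcases eq_or_lt_of_le hx'ge with heq | hlt'
    · rw [← heq, sub_self]
      exact div_nonneg (by linarith) hM.le
    · set τ := ψ c' - ψ c with hτ
      have hτpos : 0 < τ := by simp only [hτ]; linarith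
      have hτin : τ ∈ Ioo (0:ℝ) δ₁ := ⟨hτpos, by simp only [hτ]; linarith⟩
      have hM' := hsub hτin
      simp only [mem_setOf_eq] at hM'
      have heq2 : ψ c + τ = ψ c' := by simp only [hτ]; ring
      rw [heq2, hφψeq c hc hcB, le_div_iff₀ hτpos] at hM'
      have hφc' : φ (ψ c') ≤ c' := hφψ c' hc'
      rw [le_div_iff₀ hM]
      nlinarith
  -- concentration: every subwindow contains a pair with large ψ-increment relative to length
  have hC1 : ∀ u v, A < u → v < B → u < v → ∀ C, 0 < C →
      ∃ a b, u < a ∧ a < b ∧ b < v ∧ C * (b - a) < ψ b - ψ a := by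
    intro u v hu hv huv C hC
    by_contra hcc
    push_neg at hcc
    set a₀ := u + (v - u)/4 with ha₀
    set b₀ := v - (v - u)/4 with hb₀
    have hua₀ : u < a₀ := by rw [ha₀]; linarith
    have hab : a₀ < b₀ := by rw [ha₀, hb₀]; linarith
    have hb₀v : b₀ < v := by rw [hb₀]; linarith
    have hAa₀ : A < a₀ := lt_trans hu hua₀
    have hb₀B : b₀ < B := lt_trans hb₀v hv
    have hψab : ψ a₀ < ψ b₀ := hψstrict a₀ b₀ hAa₀ hab hb₀B
    set ε := (ψ b₀ - ψ a₀) / (2 * (b₀ - a₀)) with hε'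
    have hε : 0 < ε := div_pos (by linarith) (by linarith)
    have hkey : ∀ x ∈ Icc a₀ b₀, ∀ y ∈ Icc a₀ b₀, x ≤ y → ψ y - ψ x ≤ C * (y - x) := by
      intro x hx y hy hxy
      rcases eq_or_lt_of_le hxy with heq | hlt
      · rw [heq]; simp
      · exact hcc x y (lt_of_lt_of_le hua₀ hx.1) hlt (lt_of_le_of_lt hy.2 hb₀v)
    have hψcont : ContinuousOn ψ (Icc a₀ b₀) := by
      have : LipschitzOnWith (Real.toNNReal C) ψ (Icc a₀ b₀) := by
        apply LipschitzOnWith.of_dist_le_mul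
        intro x hx y hy
        have hco : (Real.toNNReal C : ℝ) = C := Real.coe_toNNReal _ hC.le
        rcases le_total x y with hxy | hxy
        · have h1 := hkey x hx y hy hxy
          have h2 : ψ x ≤ ψ y := hψmono x y (lt_of_lt_of_le hAa₀ hx.1) hxy
          rw [Real.dist_eq, Real.dist_eq, hco, abs_of_nonpos (by linarith),
            abs_of_nonpos (by linarith)]
          linarith
        · have h1 := hkey y hy x hx hxy
          have h2 : ψ y ≤ ψ x := hψmono y x (lt_of_lt_of_le hAa₀ hy.1) hxy
          rw [Real.dist_eq, Real.dist_eq, hco, abs_of_nonneg (by linarith),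
            abs_of_nonneg (by linarith)]
          linarith
      exact this.continuousOn
    set T := {x | x ∈ Icc a₀ b₀ ∧ ψ x - ψ a₀ ≤ ε * (x - a₀)} with hT
    have hTclosed : IsClosed T := by
      have hc2 : ContinuousOn (fun x => ψ x - ψ a₀ - ε * (x - a₀)) (Icc a₀ b₀) :=
        (hψcont.sub continuousOn_const).sub
          (continuousOn_const.mul ((continuous_id.sub continuous_const).continuousOn))
      have : T = Icc a₀ b₀ ∩ (fun x => ψ x - ψ a₀ - ε * (x - a₀)) ⁻¹' (Iic 0) := by
        ext x
        simp only [hT, mem_inter_iff, mem_preimage, mem_Iic, mem_setOf_eq]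
        constructor
        · rintro ⟨h1, h2⟩; exact ⟨h1, by linarith⟩
        · rintro ⟨h1, h2⟩; exact ⟨h1, by linarith⟩
      rw [this]
      exact hc2.preimage_isClosed_of_isClosed isClosed_Icc isClosed_Iic
    have hTcomp : IsCompact T := isCompact_Icc.of_isClosed_subset hTclosed (fun x hx => hx.1)
    have hTne : T.Nonempty := ⟨a₀, ⟨le_refl _, hab.le⟩, by simp⟩
    set x' := sSup T with hx'
    have hx'T : x' ∈ T := hTcomp.sSup_mem hTne
    rcases eq_or_lt_of_le hx'T.1.2 with heq | hlt
    · have h2 := hx'T.2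
      rw [heq] at h2
      have hεeq : ε * (2 * (b₀ - a₀)) = ψ b₀ - ψ a₀ := by
        rw [hε']
        field_simp
        exact mul_div_cancel_right₀ _ (ne_of_gt (by linarith : (0:ℝ) < b₀ - a₀))
      nlinarith [mul_pos hε (show (0:ℝ) < b₀ - a₀ by linarith)]
    · have hAx' : A < x' := lt_of_lt_of_le hAa₀ hx'T.1.1
      have hx'B : x' < B := lt_trans (lt_trans hlt hb₀v) hv
      obtain ⟨δ, hδ, hd⟩ := hψderiv x' hAx' hx'B (1/ε) (by positivity)
      set y := min (x' + δ/2) b₀ with hy'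
      have hy1 : x' < y := lt_min (by linarith) hlt
      have hy2 : y ≤ b₀ := min_le_right _ _
      have hy3 : y < x' + δ := lt_of_le_of_lt (min_le_left _ _) (by linarith)
      have hyA : A < y := lt_trans hAx' hy1
      have hyB : y < B := lt_of_le_of_lt hy2 hb₀B
      have hdy := hd y hyA hyB hy1 hy3
      have hrw : (y - x') / (1/ε) = ε * (y - x') := by
        field_simp
      rw [hrw] at hdy
      have hyT : y ∈ T := by
        refine ⟨⟨le_trans hx'T.1.1 hy1.le, hy2⟩, ?_⟩
        have := hx'T.2
        linarith
      have : y ≤ x' := le_csSup hTcomp.bddAbove hyT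
      linarith
  -- one step of the nested window construction
  have hstep : ∀ u v, A < u → v < B → u < v →
      ∃ u' v' b, A < u' ∧ v' < B ∧ u' < v' ∧ u < u' ∧ v' < v ∧
        v' - u' ≤ (v - u)/2 ∧ A < b ∧ b < B ∧
        ∀ c, u' ≤ c → c ≤ v' →
          b - c ≤ 2*(v - u) ∧ 0 < b - c ∧ (b - c)/3 ≤ ψ b - ψ c := by
    intro u v hu hv huv
    obtain ⟨a, b, hua, hab, hbv, hconc⟩ := hC1 u v hu hv huv 100 (by norm_num)
    set m := ψ b - ψ a with hm
    have hm0 : 0 < m := by nlinarith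
    set m' := min (min m ((a - u)/3)) ((v - u)/2) with hm'
    have hm'1 : m' ≤ m := le_trans (min_le_left _ _) (min_le_left _ _)
    have hm'2 : m' ≤ (a - u)/3 := le_trans (min_le_left _ _) (min_le_right _ _)
    have hm'3 : m' ≤ (v - u)/2 := min_le_right _ _
    have hm'0 : 0 < m' := lt_min (lt_min hm0 (by linarith)) (by linarith)
    refine ⟨a - 2*m', a - m', b, by linarith, ?_, by linarith, by linarith, by linarith,
      by linarith, lt_trans hu (by linarith), lt_trans hbv hv, ?_⟩
    · calc a - m' < a := by linarith
        _ < v := lt_trans hab hbv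
        _ < B := hv
    · intro c hc1 hc2
      have hψca : ψ c ≤ ψ a := hψmono c a (lt_of_lt_of_le (by linarith : A < a - 2*m') hc1)
        (by linarith)
      refine ⟨by linarith, by linarith, ?_⟩
      have h1 : b - c ≤ (b - a) + 2*m' := by linarith
      have h2 : b - a ≤ m / 100 := by linarith
      have h3 : ψ b - ψ c ≥ m := by rw [hm] at *; linarith
      linarith
  -- iterate the construction
  have hstep2 : ∀ s : {p : ℝ × ℝ // A < p.1 ∧ p.2 < B ∧ p.1 < p.2},
      ∃ q : {p : ℝ × ℝ // A < p.1 ∧ p.2 < B ∧ p.1 < p.2} × ℝ,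
        s.1.1 < q.1.1.1 ∧ q.1.1.2 < s.1.2 ∧
        q.1.1.2 - q.1.1.1 ≤ (s.1.2 - s.1.1)/2 ∧ A < q.2 ∧ q.2 < B ∧
        ∀ c, q.1.1.1 ≤ c → c ≤ q.1.1.2 →
          q.2 - c ≤ 2*(s.1.2 - s.1.1) ∧ 0 < q.2 - c ∧ (q.2 - c)/3 ≤ ψ q.2 - ψ c := by
    rintro ⟨⟨u, v⟩, hu, hv, huv⟩
    obtain ⟨u', v', b, h1, h2, h3, h4, h5, h6, h7, h8, h9⟩ := hstep u v hu hv huv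
    exact ⟨⟨⟨(u', v'), h1, h2, h3⟩, b⟩, h4, h5, h6, h7, h8, h9⟩
  choose Fstep hF using hstep2
  have hs₀ : A < A + (B - A)/3 ∧ B - (B - A)/3 < B ∧ A + (B - A)/3 < B - (B - A)/3 := by
    refine ⟨by linarith, by linarith, by linarith⟩
  obtain ⟨W, hW0, hWs⟩ : ∃ W : ℕ → {p : ℝ × ℝ // A < p.1 ∧ p.2 < B ∧ p.1 < p.2},
      W 0 = ⟨(A + (B - A)/3, B - (B - A)/3), hs₀⟩ ∧ ∀ n, W (n+1) = (Fstep (W n)).1 :=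
    ⟨fun n => Nat.rec ⟨(A + (B - A)/3, B - (B - A)/3), hs₀⟩ (fun _ w => (Fstep w).1) n,
      rfl, fun _ => rfl⟩
  have hp : ∀ n, (W n).1.1 < (W (n+1)).1.1 ∧ (W (n+1)).1.2 < (W n).1.2 ∧
      (W (n+1)).1.2 - (W (n+1)).1.1 ≤ ((W n).1.2 - (W n).1.1)/2 ∧
      A < (Fstep (W n)).2 ∧ (Fstep (W n)).2 < B ∧
      ∀ c, (W (n+1)).1.1 ≤ c → c ≤ (W (n+1)).1.2 →
        (Fstep (W n)).2 - c ≤ 2*((W n).1.2 - (W n).1.1) ∧ 0 < (Fstep (W n)).2 - c ∧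
          ((Fstep (W n)).2 - c)/3 ≤ ψ (Fstep (W n)).2 - ψ c := by
    intro n
    rw [hWs n]
    exact hF (W n)
  have hu_mono : Monotone (fun n => (W n).1.1) := monotone_nat_of_le_succ (fun n => (hp n).1.le)
  have hv_anti : Antitone (fun n => (W n).1.2) := antitone_nat_of_succ_le (fun n => (hp n).2.1.le)
  have hjk : ∀ j k, (W j).1.1 ≤ (W k).1.2 := by
    intro j k
    rcases le_total j k with hh | hh
    · exact le_trans (hu_mono hh) (W k).2.2.2.le
    · exact le_trans (W j).2.2.2.le (hv_anti hh)
  have hbddr : BddAbove (range fun n => (W n).1.1) := by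
    refine ⟨(W 0).1.2, ?_⟩
    rintro y ⟨n, rfl⟩
    exact hjk n 0
  set cs := ⨆ n, (W n).1.1 with hcs
  have hcge : ∀ n, (W n).1.1 ≤ cs := fun n => le_ciSup hbddr n
  have hcle : ∀ n, cs ≤ (W n).1.2 := fun n => ciSup_le (fun j => hjk j n)
  have hcA : A < cs := lt_of_lt_of_le (W 0).2.1 (hcge 0)
  have hcB : cs < B := lt_of_le_of_lt (hcle 0) (W 0).2.2.1
  have hlen : ∀ n, (W n).1.2 - (W n).1.1 ≤ ((W 0).1.2 - (W 0).1.1) * (1/2)^n := by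
    intro n
    induction n with
    | zero => simp
    | succ k ih =>
      have h1 := (hp k).2.2.1
      have h2 : ((W 0).1.2 - (W 0).1.1) * (1/2:ℝ)^(k+1)
          = (((W 0).1.2 - (W 0).1.1) * (1/2)^k)/2 := by
        rw [pow_succ]; ring
      rw [h2]
      linarith
  obtain ⟨δ, hδ, hd⟩ := hψderiv cs hcA hcB 6 (by norm_num)
  have hL0pos : 0 < (W 0).1.2 - (W 0).1.1 := by linarith [(W 0).2.2.2]
  obtain ⟨n, hn⟩ := exists_pow_lt_of_lt_one
    (show (0:ℝ) < δ/(2*((W 0).1.2 - (W 0).1.1)+1) by positivity)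
    (show (1/2:ℝ) < 1 by norm_num)
  rw [lt_div_iff₀ (by positivity)] at hn
  have hpw : (0:ℝ) < (1/2:ℝ)^n := by positivity
  have hsmall : 2*((W n).1.2 - (W n).1.1) < δ := by nlinarith [hlen n]
  obtain ⟨hA1, hA2, hA3⟩ := (hp n).2.2.2.2.2 cs (hcge (n+1)) (hcle (n+1))
  have hd2 := hd (Fstep (W n)).2 (hp n).2.2.2.1 (hp n).2.2.2.2.1 (by linarith) (by linarith)
  linarith
/-- If `D₊ f(t) ≤ -g(t)` for all `t ≥ 0`, then `f(t) - f(0) ≤ -∫₀ᵗ g`. -/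
theorem dini_integral_bound (f g : ℝ → ℝ)
    (hf : ContinuousOn f (Ici 0)) (hg : ContinuousOn g (Ici 0))
    (h : ∀ t, 0 ≤ t → dini f t ≤ -g t) :
    ∀ t, 0 ≤ t → f t - f 0 ≤ -∫ s in (0:ℝ)..t, g s := by
  intro t₀ ht₀
  have hgint : ∀ a b : ℝ, 0 ≤ a → 0 ≤ b → IntervalIntegrable g MeasureTheory.volume a b := by
    intro a b ha hb
    apply ContinuousOn.intervalIntegrable
    apply hg.mono
    intro x hx
    rcases le_total a b with hab | hab
    · rw [uIcc_of_le hab] at hx; exact le_trans ha hx.1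
    · rw [uIcc_of_ge hab] at hx; exact le_trans hb hx.1
  suffices hsuf : ∀ ε > 0, f t₀ - f 0 ≤ -(∫ s in (0:ℝ)..t₀, g s) + ε * t₀ by
    by_contra hcon
    push_neg at hcon
    set D := f t₀ - f 0 + ∫ s in (0:ℝ)..t₀, g s with hD
    have hD0 : 0 < D := by rw [hD]; linarith
    have hs := hsuf (D/(2*(t₀+1))) (by positivity)
    have h2 : D/(2*(t₀+1)) * (2*(t₀+1)) = D := by
      field_simp
    nlinarith [hs]
  intro ε hε
  set φ : ℝ → ℝ := fun x => f x + (∫ s in (0:ℝ)..x, g s) - ε * x with hφdef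
  have hφcont : ContinuousOn φ (Icc 0 t₀) := by
    apply ContinuousOn.sub
    · apply ContinuousOn.add (hf.mono Icc_subset_Ici_self)
      have hint : MeasureTheory.IntegrableOn g (uIcc 0 t₀) := by
        rw [uIcc_of_le ht₀]
        exact (hg.mono Icc_subset_Ici_self).integrableOn_Icc
      have hcp := intervalIntegral.continuousOn_primitive_interval hint
      rwa [uIcc_of_le ht₀] at hcp
    · exact (continuous_const.mul continuous_id).continuousOn
  have hslope : ∀ x ∈ Ico 0 t₀, (∀ y ∈ Ioc x t₀, φ x < φ y) →
      Tendsto (fun τ => (φ (x + τ) - φ x) / τ) (nhdsWithin 0 (Ioi 0)) atTop := by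
    intro x hx hxgt
    have hx0 : 0 ≤ x := hx.1
    have hgest : ∀ ε', 0 < ε' → ∀ᶠ τ in nhdsWithin 0 (Ioi 0),
        |(∫ s in x..(x+τ), g s) - g x * τ| ≤ ε' * τ := by
      intro ε' hε'
      have hgc : ContinuousWithinAt g (Ici 0) x := hg x hx0
      rw [Metric.continuousWithinAt_iff] at hgc
      obtain ⟨δ, hδ, hδp⟩ := hgc ε' hε'
      filter_upwards [Ioo_mem_nhdsGT hδ]
      intro τ hτ
      have hτ0 : 0 < τ := hτ.1
      have hbound : ∀ s ∈ uIoc x (x+τ), ‖g s - g x‖ ≤ ε' := by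
        intro s hs
        rw [uIoc_of_le (by linarith : x ≤ x + τ)] at hs
        apply le_of_lt
        apply hδp
        · exact le_trans hx0 hs.1.le
        · rw [Real.dist_eq, abs_of_pos (by linarith [hs.1] : (0:ℝ) < s - x)]
          linarith [hs.2, hτ.2]
      have h1 := intervalIntegral.norm_integral_le_of_norm_le_const hbound
      rw [intervalIntegral.integral_sub (hgint x (x+τ) hx0 (by linarith))
        intervalIntegrable_const, intervalIntegral.integral_const] at h1
      simp only [smul_eq_mul, add_sub_cancel_left] at h1
      rw [abs_of_pos hτ0, Real.norm_eq_abs] at h1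
      have hmc : τ * g x = g x * τ := mul_comm _ _
      rwa [hmc] at h1
    have hdecomp : ∀ τ : ℝ, 0 < τ →
        φ (x + τ) - φ x = (f (x+τ) - f x) + (∫ s in x..(x+τ), g s) - ε * τ := by
      intro τ hτ
      have hadj := intervalIntegral.integral_add_adjacent_intervals
        (hgint 0 x le_rfl hx0) (hgint x (x+τ) hx0 (by linarith))
      simp only [hφdef]
      rw [← hadj]
      ring
    have hfT : Tendsto (fun τ => (f (x + τ) - f x)/τ) (nhdsWithin 0 (Ioi 0)) atTop := by
      by_contra hnt
      have hev : ∀ᶠ τ in nhdsWithin 0 (Ioi 0), ε/2 - g x ≤ (f (x+τ) - f x)/τ := by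
        filter_upwards [hgest (ε/2) (by linarith),
          Ioo_mem_nhdsGT (show (0:ℝ) < t₀ - x by linarith [hx.2])]
        intro τ h1 h2
        have hτ0 : 0 < τ := h2.1
        have hpos : 0 < φ (x+τ) - φ x := by
          have := hxgt (x+τ) ⟨by linarith, by linarith [h2.2]⟩
          linarith
        rw [hdecomp τ hτ0] at hpos
        have hil : (∫ s in x..(x+τ), g s) ≤ g x * τ + (ε/2) * τ := by
          linarith [(abs_le.mp h1).2]
        rw [le_div_iff₀ hτ0]
        nlinarith
      have hliminf := liminf_ge_aux hev hnt
      have hdini : ε/2 - g x ≤ dini f x := hliminf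
      have := h x hx0
      linarith
    rw [tendsto_atTop]
    intro M
    filter_upwards [hfT.eventually_ge_atTop (M + ε + 1 - g x), hgest 1 one_pos,
      self_mem_nhdsWithin]
    intro τ h1 h2 h3
    have hτ0 : 0 < τ := h3
    rw [le_div_iff₀ hτ0, hdecomp τ hτ0]
    have hf1 : (M + ε + 1 - g x) * τ ≤ f (x+τ) - f x := (le_div_iff₀ hτ0).mp h1
    have hring : (M + ε + 1 - g x) * τ = M*τ + ε*τ + 1*τ - g x*τ := by ring
    have hil : g x * τ - 1 * τ ≤ ∫ s in x..(x+τ), g s := by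
      linarith [(abs_le.mp h2).1]
    linarith
  have key := mono_of_slope φ t₀ ht₀ hφcont hslope
  have h0 : (∫ s in (0:ℝ)..(0:ℝ), g s) = 0 := intervalIntegral.integral_same
  simp only [hφdef] at key
  rw [h0] at key
  linarith
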